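/- Let X be a compact metrizable topological space, let α : X ≃ₜ X be a homeomorphism, let B be a unital C*-algebra, let φ : C(X, ℂ) →⋆ₐ[ℂ] B be a star-algebra homomorphism, and let u ∈ B be a unitary such that star u * φ f * u = φ (f ∘ α) for every f ∈ C(X, ℂ). Fix x ∈ X and k ∈ ℕ. If h ∈ C(X, ℂ) satisfies h (αⁱ x) = 0 for every i = 1, 2, …, k (where αⁱ denotes the i-th iterate of α), then φ h * u ^ k belongs to A_x. -/

import Mathlib

/-- Lemma 4.2(ii) of the paper, in the abstract covariant setting: if `h` vanishes at `α x, …, α^k x`,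
then `φ h * u ^ k` lies in the orbit-breaking subalgebra
`A_x`, the closed star-subalgebra of `B` generated by `φ(C(X)) ∪ u·φ(C₀(X ∖ {x}))`. -/
theorem mul_pow_mem_orbitBreaking
    {X : Type*} [TopologicalSpace X] [CompactSpace X] [TopologicalSpace.MetrizableSpace X]
    (α : X ≃ₜ X)
    {B : Type*} [CStarAlgebra B]
    (φ : C(X, ℂ) →⋆ₐ[ℂ] B)
    (u : B) (hu : star u * u = 1) (hu' : u * star u = 1)
    (hcov : ∀ f : C(X, ℂ), star u * φ f * u = φ (f.comp (α : C(X, X))))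
    (x : X) (k : ℕ) (h : C(X, ℂ))
    (hh : ∀ i : ℕ, 1 ≤ i → i ≤ k → h ((⇑α)^[i] x) = 0) :
    φ h * u ^ k ∈
      closure (StarAlgebra.adjoin ℂ
        (Set.range (⇑φ) ∪ {b : B | ∃ g : C(X, ℂ), g x = 0 ∧ b = u * φ g}) : Set B) := by
  set Sgen : Set B :=
    Set.range (⇑φ) ∪ {b : B | ∃ g : C(X, ℂ), g x = 0 ∧ b = u * φ g} with hSgen
  induction k generalizing h with
  | zero =>
    simp only [pow_zero, mul_one]
    exact subset_closure (StarAlgebra.subset_adjoin ℂ _ (Or.inl ⟨h, rfl⟩))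
  | succ k ih =>
    rcases subsingleton_or_nontrivial B with hB | hB
    · exact subset_closure (by
        rw [Subsingleton.elim (φ h * u ^ (k + 1)) 0]
        exact zero_mem _)
    -- key commutation relation
    have key : ∀ f : C(X, ℂ), φ f * u = u * φ (f.comp (α : C(X, X))) := by
      intro f
      calc φ f * u = u * (star u * φ f * u) := by
            rw [← mul_assoc, ← mul_assoc, hu', one_mul]
        _ = u * φ (f.comp (α : C(X, X))) := by rw [hcov]
    set g : C(X, ℂ) := h.comp (α : C(X, X)) with hgdef
    have hgx : ∀ i : ℕ, i ≤ k → g ((⇑α)^[i] x) = 0 := by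
      intro i hi
      have := hh (i + 1) (by omega) (by omega)
      rwa [Function.iterate_succ_apply'] at this
    have heq : φ h * u ^ (k + 1) = u * φ g * u ^ k := by
      rw [pow_succ', ← mul_assoc, key h]
    have hIH : φ g * u ^ k ∈ closure (StarAlgebra.adjoin ℂ Sgen : Set B) :=
      ih g (fun i h1 h2 => hgx i h2)
    have hnu : ‖u‖ = 1 := by
      have h2 : ‖star u * u‖ = ‖u‖ * ‖u‖ := CStarRing.norm_star_mul_self
      rw [hu, norm_one] at h2
      nlinarith [norm_nonneg u]
    have hupow : ∀ n : ℕ, ‖u ^ n‖ ≤ 1 := by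
      intro n
      induction n with
      | zero => simp
      | succ n ihn =>
        calc ‖u ^ (n + 1)‖ = ‖u ^ n * u‖ := by rw [pow_succ]
          _ ≤ ‖u ^ n‖ * ‖u‖ := norm_mul_le _ _
          _ ≤ 1 * 1 := by
              apply mul_le_mul ihn (le_of_eq hnu) (norm_nonneg _) zero_le_one
          _ = 1 := one_mul 1
    rw [heq]
    -- approximate by products of generators
    rw [← closure_closure (s := (StarAlgebra.adjoin ℂ Sgen : Set B))]
    rw [Metric.mem_closure_iff]
    intro ε hε
    -- the cut-off function
    set e : C(X, ℂ) :=
      ⟨fun y => ((min 1 (‖g y‖ / (ε / 2)) : ℝ) : ℂ),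
        Complex.continuous_ofReal.comp
          (continuous_const.min ((continuous_norm.comp g.continuous).div_const _))⟩ with hedef
    have hex : e x = 0 := by
      have := hgx 0 (Nat.zero_le k)
      simp only [Function.iterate_zero, id_eq] at this
      simp [hedef, this, min_eq_right, le_of_lt, div_nonneg, hε.le]
    have hbound : ‖g - e * g‖ ≤ ε / 2 := by
      rw [ContinuousMap.norm_le _ (by positivity)]
      intro y
      simp only [ContinuousMap.sub_apply, ContinuousMap.mul_apply, hedef,
        ContinuousMap.coe_mk]
      by_cases hy : ‖g y‖ ≤ ε / 2
      · have h0 : (0 : ℝ) ≤ min 1 (‖g y‖ / (ε / 2)) :=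
          le_min zero_le_one (by positivity)
        have h1 : min 1 (‖g y‖ / (ε / 2)) ≤ 1 := min_le_left _ _
        have : g y - ((min 1 (‖g y‖ / (ε / 2)) : ℝ) : ℂ) * g y
            = ((1 - min 1 (‖g y‖ / (ε / 2)) : ℝ) : ℂ) * g y := by
          push_cast; ring
        rw [this, norm_mul]
        have : ‖((1 - min 1 (‖g y‖ / (ε / 2)) : ℝ) : ℂ)‖ ≤ 1 := by
          rw [Complex.norm_real, Real.norm_eq_abs, abs_of_nonneg (by linarith)]
          linarith
        calc _ ≤ 1 * ‖g y‖ := by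
              apply mul_le_mul_of_nonneg_right this (norm_nonneg _)
          _ = ‖g y‖ := one_mul _
          _ ≤ ε / 2 := by exact hy
      · push_neg at hy
        have : min 1 (‖g y‖ / (ε / 2)) = 1 := by
          apply min_eq_left
          rw [le_div_iff₀ (by positivity)]
          linarith
        rw [this]
        simp only [Complex.ofReal_one, one_mul, sub_self, norm_zero]
        positivity
    refine ⟨u * φ e * (φ g * u ^ k), ?_, ?_⟩
    · -- membership: product of a generator and the inductive element
      have h1 : u * φ e ∈ (StarAlgebra.adjoin ℂ Sgen).topologicalClosure :=
        subset_closure (StarAlgebra.subset_adjoin ℂ _ (Or.inr ⟨e, hex, rfl⟩))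
      have h2 : φ g * u ^ k ∈ (StarAlgebra.adjoin ℂ Sgen).topologicalClosure := hIH
      exact mul_mem h1 h2
    · rw [dist_eq_norm]
      have hdiff : u * φ g * u ^ k - u * φ e * (φ g * u ^ k)
          = u * φ (g - e * g) * u ^ k := by
        rw [map_sub, map_mul]
        noncomm_ring
      rw [hdiff]
      calc ‖u * φ (g - e * g) * u ^ k‖
          ≤ ‖u * φ (g - e * g)‖ * ‖u ^ k‖ := norm_mul_le _ _
        _ ≤ ‖u‖ * ‖φ (g - e * g)‖ * ‖u ^ k‖ := by
            apply mul_le_mul_of_nonneg_right (norm_mul_le _ _) (norm_nonneg _)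
        _ ≤ 1 * (ε / 2) * 1 := by
            apply mul_le_mul _ (hupow k) (norm_nonneg _) (by positivity)
            rw [hnu, one_mul, one_mul]
            exact le_trans (NonUnitalStarAlgHom.norm_apply_le φ _) hbound
        _ < ε := by linarith
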